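/- There exist universal constants C ≥ c > 0 such that for all b, q ∈ [0,∞): c^{1+q}·min{1+q, b}^{1+q} ≤ ∫_0^b e^{-ω} ω^q dω ≤ C^{1+q}·min{1+q, b}^{1+q}, and c·e^b·b^{1+q}/(1+q+b) ≤ ∫_0^b e^{ω} ω^q dω ≤ C·e^b·b^{1+q}/(1+q+b). -/

import Mathlib

open MeasureTheory

namespace IncGammaAux

lemma cont_rpow {q : ℝ} (hq : 0 ≤ q) : Continuous fun x : ℝ => x ^ q :=
  continuous_iff_continuousAt.mpr fun x => Real.continuousAt_rpow_const x q (Or.inr hq)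

lemma intg {q : ℝ} (hq : 0 ≤ q) {g : ℝ → ℝ} (hg : Continuous g) (a b : ℝ) :
    IntegrableOn (fun ω => g ω * ω ^ q) (Set.Icc a b) :=
  (hg.mul (cont_rpow hq)).integrableOn_Icc

lemma integral_rpow_Icc {b q : ℝ} (hb : 0 ≤ b) (hq : 0 ≤ q) :
    ∫ ω in Set.Icc (0:ℝ) b, ω ^ q = b ^ (1+q) / (1+q) := by
  rw [integral_Icc_eq_integral_Ioc, ← intervalIntegral.integral_of_le hb,
    integral_rpow (Or.inl (by linarith : (-1:ℝ) < q)),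
    Real.zero_rpow (by linarith : q + 1 ≠ 0), show q + 1 = 1 + q by ring]
  ring

lemma integral_exp_mul_Icc {k b : ℝ} (hb : 0 ≤ b) (hk : k ≠ 0) :
    ∫ ω in Set.Icc (0:ℝ) b, Real.exp (k * ω) = (Real.exp (k*b) - 1) / k := by
  rw [integral_Icc_eq_integral_Ioc, ← intervalIntegral.integral_of_le hb,
    intervalIntegral.integral_comp_mul_left Real.exp hk, mul_zero, integral_exp, Real.exp_zero,
    smul_eq_mul]
  ring

lemma lower_neg {b q : ℝ} (hb : 0 ≤ b) (hq : 0 ≤ q) :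
    Real.exp (-2) ^ (1+q) * min (1+q) b ^ (1+q) ≤
      ∫ ω in Set.Icc (0:ℝ) b, Real.exp (-ω) * ω ^ q := by
  set m := min (1+q) b with hm
  have hm0 : 0 ≤ m := le_min (by linarith) hb
  have hmb : m ≤ b := min_le_right _ _
  have hmq : m ≤ 1 + q := min_le_left _ _
  have hq1 : (0:ℝ) < 1 + q := by linarith
  have h1 : (∫ ω in Set.Icc (0:ℝ) m, Real.exp (-m) * ω ^ q) ≤
      ∫ ω in Set.Icc (0:ℝ) m, Real.exp (-ω) * ω ^ q := by
    refine setIntegral_mono_on (intg hq continuous_const 0 m)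
      (intg hq (Real.continuous_exp.comp continuous_neg) 0 m) measurableSet_Icc ?_
    intro x hx
    exact mul_le_mul_of_nonneg_right (Real.exp_le_exp.mpr (by linarith [hx.2]))
      (Real.rpow_nonneg hx.1 q)
  have h2 : (∫ ω in Set.Icc (0:ℝ) m, Real.exp (-ω) * ω ^ q) ≤
      ∫ ω in Set.Icc (0:ℝ) b, Real.exp (-ω) * ω ^ q := by
    refine setIntegral_mono_set (intg hq (Real.continuous_exp.comp continuous_neg) 0 b)
      ?_ (HasSubset.Subset.eventuallyLE (Set.Icc_subset_Icc_right hmb))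
    refine (ae_restrict_iff' measurableSet_Icc).mpr (Filter.Eventually.of_forall fun x hx => ?_)
    exact mul_nonneg (Real.exp_pos _).le (Real.rpow_nonneg hx.1 q)
  have h3 : (∫ ω in Set.Icc (0:ℝ) m, Real.exp (-m) * ω ^ q)
      = Real.exp (-m) * (m ^ (1+q) / (1+q)) := by
    rw [MeasureTheory.integral_const_mul, integral_rpow_Icc hm0 hq]
  have key : Real.exp (-2*(1+q)) * (1+q) ≤ Real.exp (-m) := by
    have h4 : 1 + q ≤ Real.exp (1+q) := by
      have := Real.add_one_le_exp q
      have := Real.exp_le_exp.mpr (show q ≤ 1+q by linarith)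
      linarith
    calc Real.exp (-2*(1+q)) * (1+q) ≤ Real.exp (-2*(1+q)) * Real.exp (1+q) :=
          mul_le_mul_of_nonneg_left h4 (Real.exp_pos _).le
      _ = Real.exp (-(1+q)) := by rw [← Real.exp_add]; congr 1; ring
      _ ≤ Real.exp (-m) := Real.exp_le_exp.mpr (by linarith)
  have h5 : Real.exp (-2) ^ (1+q) * m ^ (1+q) ≤ Real.exp (-m) * (m ^ (1+q) / (1+q)) := by
    have e1 : Real.exp (-2) ^ (1+q) = Real.exp (-2*(1+q)) := (Real.exp_mul (-2) (1+q)).symm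
    have hMn : 0 ≤ m ^ (1+q) := Real.rpow_nonneg hm0 _
    rw [e1]
    have h7 : Real.exp (-2*(1+q)) ≤ Real.exp (-m) / (1+q) := (le_div_iff₀ hq1).mpr key
    calc Real.exp (-2*(1+q)) * m ^ (1+q) ≤ (Real.exp (-m) / (1+q)) * m ^ (1+q) :=
          mul_le_mul_of_nonneg_right h7 hMn
      _ = Real.exp (-m) * (m ^ (1+q) / (1+q)) := by ring
  linarith [h5.trans (h3 ▸ (h1.trans h2))]

lemma upper_neg {b q : ℝ} (hb : 0 ≤ b) (hq : 0 ≤ q) :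
    (∫ ω in Set.Icc (0:ℝ) b, Real.exp (-ω) * ω ^ q) ≤ (4:ℝ) ^ (1+q) * min (1+q) b ^ (1+q) := by
  have hq1 : (0:ℝ) < 1 + q := by linarith
  have h4p : (1:ℝ) ≤ (4:ℝ) ^ (1+q) := by
    have := Real.rpow_le_rpow_of_exponent_le (show (1:ℝ) ≤ 4 by norm_num)
      (show (0:ℝ) ≤ 1+q by linarith)
    rwa [Real.rpow_zero] at this
  rcases le_total b (1+q) with hcase | hcase
  · rw [min_eq_right hcase]
    have h1 : (∫ ω in Set.Icc (0:ℝ) b, Real.exp (-ω) * ω ^ q) ≤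
        ∫ ω in Set.Icc (0:ℝ) b, ω ^ q := by
      refine setIntegral_mono_on (intg hq (Real.continuous_exp.comp continuous_neg) 0 b)
        (cont_rpow hq).integrableOn_Icc measurableSet_Icc ?_
      intro x hx
      have := Real.exp_le_one_iff.mpr (neg_nonpos.mpr hx.1)
      nlinarith [Real.rpow_nonneg hx.1 q]
    rw [integral_rpow_Icc hb hq] at h1
    have h2 : b ^ (1+q) / (1+q) ≤ b ^ (1+q) :=
      div_le_self (Real.rpow_nonneg hb _) (by linarith)
    nlinarith [Real.rpow_nonneg hb (1+q)]
  · rw [min_eq_left hcase]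
    set p := 1 + q with hp
    have hp1 : (1:ℝ) ≤ p := by simp [hp]; linarith
    have hp0 : (0:ℝ) < p := by linarith
    have h2p : (0:ℝ) < 2*p := by linarith
    have ptw : ∀ x ∈ Set.Icc (0:ℝ) b, Real.exp (-x) * x ^ q ≤
        (2*p) ^ p * Real.exp ((-2⁻¹) * x) := by
      intro x hx
      have hx0 := hx.1
      have key : x ^ q * Real.exp (-(2⁻¹*x)) ≤ (2*p) ^ p := by
        have h1p : (1:ℝ) ≤ (2*p) ^ p := by
          have := Real.rpow_le_rpow_of_exponent_le (show (1:ℝ) ≤ 2*p by linarith)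
            (show (0:ℝ) ≤ p by linarith)
          rwa [Real.rpow_zero] at this
        rcases le_total x 1 with h1 | h1
        · have hx1 : x ^ q ≤ 1 := Real.rpow_le_one hx0 h1 hq
          have he1 : Real.exp (-(2⁻¹*x)) ≤ 1 := Real.exp_le_one_iff.mpr (by nlinarith)
          nlinarith [Real.rpow_nonneg hx0 q, (Real.exp_pos (-(2⁻¹*x))).le]
        · have h2 : x ^ q ≤ x ^ p := Real.rpow_le_rpow_of_exponent_le h1 (by simp [hp])
          have h3 : x / (2*p) ≤ Real.exp (x/(2*p)) := by
            linarith [Real.add_one_le_exp (x/(2*p))]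
          have h4 : (x/(2*p)) ^ p ≤ (Real.exp (x/(2*p))) ^ p :=
            Real.rpow_le_rpow (by positivity) h3 hp0.le
          rw [Real.div_rpow hx0 h2p.le, ← Real.exp_mul,
            show x/(2*p)*p = 2⁻¹*x by field_simp] at h4
          have h5 : x ^ p ≤ (2*p) ^ p * Real.exp (2⁻¹*x) := by
            rw [div_le_iff₀ (by positivity : (0:ℝ) < (2*p)^p)] at h4
            nlinarith [h4]
          have h6 : x ^ q * Real.exp (-(2⁻¹*x)) ≤ x ^ p * Real.exp (-(2⁻¹*x)) :=
            mul_le_mul_of_nonneg_right h2 (Real.exp_pos _).le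
          have h7 : x ^ p * Real.exp (-(2⁻¹*x)) ≤
              (2*p) ^ p * Real.exp (2⁻¹*x) * Real.exp (-(2⁻¹*x)) :=
            mul_le_mul_of_nonneg_right h5 (Real.exp_pos _).le
          have h8 : Real.exp (2⁻¹*x) * Real.exp (-(2⁻¹*x)) = 1 := by
            rw [← Real.exp_add]; simp
          nlinarith [h6, h7, h8]
      have e1 : Real.exp (-x) = Real.exp ((-2⁻¹)*x) * Real.exp (-(2⁻¹*x)) := by
        rw [← Real.exp_add]; congr 1; ring
      calc Real.exp (-x) * x ^ q
          = Real.exp ((-2⁻¹)*x) * (x ^ q * Real.exp (-(2⁻¹*x))) := by rw [e1]; ring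
        _ ≤ Real.exp ((-2⁻¹)*x) * ((2*p) ^ p) :=
            mul_le_mul_of_nonneg_left key (Real.exp_pos _).le
        _ = (2*p) ^ p * Real.exp ((-2⁻¹) * x) := by ring
    have h1 : (∫ ω in Set.Icc (0:ℝ) b, Real.exp (-ω) * ω ^ q) ≤
        ∫ ω in Set.Icc (0:ℝ) b, (2*p) ^ p * Real.exp ((-2⁻¹) * ω) := by
      refine setIntegral_mono_on (intg hq (Real.continuous_exp.comp continuous_neg) 0 b)
        ((continuous_const.mul (Real.continuous_exp.comp (continuous_const.mul
          continuous_id))).integrableOn_Icc) measurableSet_Icc ptw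
    have h2 : (∫ ω in Set.Icc (0:ℝ) b, (2*p) ^ p * Real.exp ((-2⁻¹) * ω))
        = (2*p) ^ p * ((Real.exp ((-2⁻¹)*b) - 1) / (-2⁻¹)) := by
      rw [MeasureTheory.integral_const_mul, integral_exp_mul_Icc hb (by norm_num)]
    have h3 : (Real.exp ((-2⁻¹)*b) - 1) / (-2⁻¹) ≤ 2 := by
      have := (Real.exp_pos ((-2⁻¹)*b)).le
      rw [div_le_iff_of_neg (by norm_num : (-2⁻¹:ℝ) < 0)]
      linarith
    have h4 : (2*p) ^ p * ((Real.exp ((-2⁻¹)*b) - 1) / (-2⁻¹)) ≤ (2*p) ^ p * 2 :=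
      mul_le_mul_of_nonneg_left h3 (Real.rpow_nonneg h2p.le _)
    have h5 : (2*p) ^ p * 2 ≤ (4:ℝ) ^ p * p ^ p := by
      have e2 : ((4:ℝ)) ^ p = (2:ℝ) ^ p * (2:ℝ) ^ p := by
        rw [← Real.mul_rpow (by norm_num) (by norm_num)]; norm_num
      have e3 : ((2*p:ℝ)) ^ p = (2:ℝ) ^ p * p ^ p := Real.mul_rpow (by norm_num) hp0.le
      have h6 : (2:ℝ) ≤ (2:ℝ) ^ p := by
        have := Real.rpow_le_rpow_of_exponent_le (one_le_two) hp1
        rwa [Real.rpow_one] at this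
      rw [e2, e3]
      nlinarith [Real.rpow_nonneg hp0.le p, Real.rpow_nonneg (show (0:ℝ) ≤ 2 by norm_num) p,
        Real.rpow_nonneg h2p.le p]
    linarith [h1, h2 ▸ h4]

lemma lower_pos {b q : ℝ} (hb : 0 ≤ b) (hq : 0 ≤ q) :
    Real.exp (-2) * Real.exp b * b ^ (1+q) / (1+q+b) ≤
      ∫ ω in Set.Icc (0:ℝ) b, Real.exp ω * ω ^ q := by
  have hq1 : (0:ℝ) < 1 + q := by linarith
  have hD : (0:ℝ) < 1 + q + b := by linarith
  rcases hb.eq_or_lt with hb0 | hb0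
  · rw [← hb0, Real.zero_rpow (by linarith : (1+q:ℝ) ≠ 0)]
    simp only [mul_zero, zero_div]
    exact setIntegral_nonneg measurableSet_Icc fun x hx =>
      mul_nonneg (Real.exp_pos _).le (Real.rpow_nonneg hx.1 q)
  · set s := b / (1+q+b) with hs
    have hs0 : 0 < s := div_pos hb0 hD
    have hs1 : s ≤ 1 := by rw [hs, div_le_one hD]; linarith
    have hsb : s < b := by
      rw [hs, div_lt_iff₀ hD]
      nlinarith
    have hbs0 : 0 ≤ b - s := by linarith
    -- pointwise lower bound on Icc (b-s) b
    have h1 : (∫ ω in Set.Icc (b-s) b, Real.exp (b-s) * (b-s) ^ q) ≤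
        ∫ ω in Set.Icc (b-s) b, Real.exp ω * ω ^ q := by
      refine setIntegral_mono_on
        ((continuous_const.mul continuous_const).integrableOn_Icc)
        (intg hq Real.continuous_exp (b-s) b) measurableSet_Icc ?_
      intro x hx
      have h2 : Real.exp (b-s) ≤ Real.exp x := Real.exp_le_exp.mpr hx.1
      have h3 : (b-s) ^ q ≤ x ^ q := Real.rpow_le_rpow hbs0 hx.1 hq
      have := Real.rpow_nonneg hbs0 q
      have := (Real.exp_pos (b-s)).le
      nlinarith [Real.rpow_nonneg (le_trans hbs0 hx.1) q, (Real.exp_pos x).le]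
    have h2 : (∫ ω in Set.Icc (b-s) b, Real.exp ω * ω ^ q) ≤
        ∫ ω in Set.Icc (0:ℝ) b, Real.exp ω * ω ^ q := by
      refine setIntegral_mono_set (intg hq Real.continuous_exp 0 b)
        ?_ (HasSubset.Subset.eventuallyLE (Set.Icc_subset_Icc_left hbs0))
      refine (ae_restrict_iff' measurableSet_Icc).mpr (Filter.Eventually.of_forall fun x hx => ?_)
      exact mul_nonneg (Real.exp_pos _).le (Real.rpow_nonneg hx.1 q)
    have h3 : (∫ ω in Set.Icc (b-s) b, Real.exp (b-s) * (b-s) ^ q)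
        = s * (Real.exp (b-s) * (b-s) ^ q) := by
      rw [setIntegral_const, measureReal_def, Real.volume_Icc, smul_eq_mul,
        show b - (b - s) = s by ring, ENNReal.toReal_ofReal hs0.le]
    -- the key algebraic estimate
    have hP : Real.exp (-1) * b ^ q ≤ (b - s) ^ q := by
      have e1 : b - s = b * ((q+b)/(1+q+b)) := by
        rw [hs]; field_simp; ring
      have e2 : (b-s) ^ q = b ^ q * ((q+b)/(1+q+b)) ^ q := by
        rw [e1, Real.mul_rpow hb (by positivity)]
      have hyq : Real.exp (-1) ≤ ((q+b)/(1+q+b)) ^ q := by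
        rcases hq.eq_or_lt with hq0 | hq0
        · rw [← hq0, Real.rpow_zero]
          exact (Real.exp_le_one_iff.mpr (by norm_num)).trans (le_refl 1)
        · have hqb : (0:ℝ) < q + b := by linarith
          have hy : (0:ℝ) < (q+b)/(1+q+b) := by positivity
          rw [Real.rpow_def_of_pos hy]
          refine Real.exp_le_exp.mpr ?_
          have hlog : Real.log ((1+q+b)/(q+b)) ≤ 1/(q+b) := by
            have := Real.log_le_sub_one_of_pos (show (0:ℝ) < (1+q+b)/(q+b) by positivity)
            have e3 : (1+q+b)/(q+b) - 1 = 1/(q+b) := by field_simp; ring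
            linarith
          have e4 : Real.log ((q+b)/(1+q+b)) = - Real.log ((1+q+b)/(q+b)) := by
            rw [← Real.log_inv]
            congr 1
            field_simp
          have h5 : q * Real.log ((1+q+b)/(q+b)) ≤ q * (1/(q+b)) :=
            mul_le_mul_of_nonneg_left hlog hq
          have h6 : q * (1/(q+b)) ≤ 1 := by
            rw [mul_one_div, div_le_one hqb]; linarith
          rw [e4]
          nlinarith
      rw [e2]
      calc Real.exp (-1) * b ^ q = b ^ q * Real.exp (-1) := by ring
        _ ≤ b ^ q * ((q+b)/(1+q+b)) ^ q :=
            mul_le_mul_of_nonneg_left hyq (Real.rpow_nonneg hb q)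
    -- conclude
    have hfinal : Real.exp (-2) * Real.exp b * b ^ (1+q) / (1+q+b) ≤
        s * (Real.exp (b-s) * (b-s) ^ q) := by
      have e5 : b ^ (1+q) = b * b ^ q := by
        rw [show (1+q:ℝ) = q + 1 by ring, Real.rpow_add hb0, Real.rpow_one]; ring
      have kk : Real.exp (-2) * Real.exp b * b ^ q ≤ Real.exp (b-s) * (b-s) ^ q := by
        calc Real.exp (-2) * Real.exp b * b ^ q = Real.exp (b - 2) * b ^ q := by
              rw [← Real.exp_add]; ring_nf
          _ ≤ Real.exp (b - s - 1) * b ^ q := by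
              refine mul_le_mul_of_nonneg_right (Real.exp_le_exp.mpr (by linarith))
                (Real.rpow_nonneg hb q)
          _ = Real.exp (b-s) * (Real.exp (-1) * b ^ q) := by
              rw [show b - s - 1 = (b - s) + (-1) by ring, Real.exp_add]; ring
          _ ≤ Real.exp (b-s) * ((b-s) ^ q) :=
              mul_le_mul_of_nonneg_left hP (Real.exp_pos _).le
      calc Real.exp (-2) * Real.exp b * b ^ (1+q) / (1+q+b)
          = (b / (1+q+b)) * (Real.exp (-2) * Real.exp b * b ^ q) := by rw [e5]; ring
        _ ≤ (b / (1+q+b)) * (Real.exp (b-s) * (b-s) ^ q) :=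
            mul_le_mul_of_nonneg_left kk (by positivity)
        _ = s * (Real.exp (b-s) * (b-s) ^ q) := by rw [hs]
    linarith [hfinal.trans (h3 ▸ (h1.trans h2))]

lemma upper_pos {b q : ℝ} (hb : 0 ≤ b) (hq : 0 ≤ q) :
    (∫ ω in Set.Icc (0:ℝ) b, Real.exp ω * ω ^ q) ≤ 4 * Real.exp b * b ^ (1+q) / (1+q+b) := by
  have hq1 : (0:ℝ) < 1 + q := by linarith
  have hD : (0:ℝ) < 1 + q + b := by linarith
  have hBn : 0 ≤ b ^ (1+q) := Real.rpow_nonneg hb _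
  have hEn : 0 < Real.exp b := Real.exp_pos b
  rcases le_total b 1 with hcase | hcase
  · have h1 : (∫ ω in Set.Icc (0:ℝ) b, Real.exp ω * ω ^ q) ≤
        ∫ ω in Set.Icc (0:ℝ) b, Real.exp b * ω ^ q := by
      refine setIntegral_mono_on (intg hq Real.continuous_exp 0 b)
        (intg hq continuous_const 0 b) measurableSet_Icc ?_
      intro x hx
      exact mul_le_mul_of_nonneg_right (Real.exp_le_exp.mpr hx.2) (Real.rpow_nonneg hx.1 q)
    have h2 : (∫ ω in Set.Icc (0:ℝ) b, Real.exp b * ω ^ q)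
        = Real.exp b * (b ^ (1+q) / (1+q)) := by
      rw [MeasureTheory.integral_const_mul, integral_rpow_Icc hb hq]
    have h3 : Real.exp b * (b ^ (1+q) / (1+q)) ≤ 4 * Real.exp b * b ^ (1+q) / (1+q+b) := by
      rw [show Real.exp b * (b ^ (1+q) / (1+q)) = Real.exp b * b ^ (1+q) / (1+q) by ring,
        div_le_div_iff₀ hq1 hD]
      nlinarith [mul_nonneg hEn.le hBn]
    linarith [h2 ▸ h1]
  · have hb0 : (0:ℝ) < b := lt_of_lt_of_le one_pos hcase
    set α := (b+q)/b with hα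
    have hα0 : 0 < α := by positivity
    have hαb : α * b = b + q := by rw [hα]; field_simp
    have ptw : ∀ x ∈ Set.Icc (0:ℝ) b, Real.exp x * x ^ q ≤
        (b ^ q * Real.exp (-q)) * Real.exp (α * x) := by
      intro x hx
      have hx0 := hx.1
      have h1 : x / b ≤ Real.exp (-((b-x)/b)) := by
        have := Real.one_sub_le_exp_neg ((b-x)/b)
        have e1 : 1 - (b-x)/b = x/b := by field_simp; ring
        linarith
      have h2 : (x/b) ^ q ≤ (Real.exp (-((b-x)/b))) ^ q :=
        Real.rpow_le_rpow (by positivity) h1 hq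
      rw [Real.div_rpow hx0 hb, ← Real.exp_mul] at h2
      have h3 : x ^ q ≤ b ^ q * Real.exp (-((b-x)/b) * q) := by
        rw [div_le_iff₀ (by positivity : (0:ℝ) < b ^ q)] at h2
        nlinarith [h2]
      have h4 : Real.exp x * x ^ q ≤ b ^ q * (Real.exp x * Real.exp (-((b-x)/b) * q)) := by
        nlinarith [mul_le_mul_of_nonneg_left h3 hEn.le, (Real.exp_pos x).le,
          mul_le_mul_of_nonneg_left h3 (Real.exp_pos x).le]
      have h5 : Real.exp x * Real.exp (-((b-x)/b) * q) = Real.exp (-q) * Real.exp (α * x) := by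
        rw [← Real.exp_add, ← Real.exp_add]
        congr 1
        rw [hα]
        field_simp [hb0.ne']
        ring
      rw [h5] at h4
      linarith [h4]
    have h1 : (∫ ω in Set.Icc (0:ℝ) b, Real.exp ω * ω ^ q) ≤
        ∫ ω in Set.Icc (0:ℝ) b, (b ^ q * Real.exp (-q)) * Real.exp (α * ω) := by
      refine setIntegral_mono_on (intg hq Real.continuous_exp 0 b)
        ((continuous_const.mul (Real.continuous_exp.comp (continuous_const.mul
          continuous_id))).integrableOn_Icc) measurableSet_Icc ptw
    have h2 : (∫ ω in Set.Icc (0:ℝ) b, (b ^ q * Real.exp (-q)) * Real.exp (α * ω))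
        = (b ^ q * Real.exp (-q)) * ((Real.exp (α*b) - 1) / α) := by
      rw [MeasureTheory.integral_const_mul, integral_exp_mul_Icc hb hα0.ne']
    have h3 : (b ^ q * Real.exp (-q)) * ((Real.exp (α*b) - 1) / α) ≤
        Real.exp b * b ^ (1+q) / (b+q) := by
      have hbq : (0:ℝ) < b + q := by linarith
      have e6 : (Real.exp (α*b) - 1) / α ≤ Real.exp (α*b) / α := by
        apply div_le_div_of_nonneg_right ?_ hα0.le
        linarith
      have e7 : (b ^ q * Real.exp (-q)) * (Real.exp (α*b) / α) = Real.exp b * b ^ (1+q) / (b+q) := by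
        rw [hαb, show Real.exp (b+q) = Real.exp b * Real.exp q by rw [← Real.exp_add],
          show (1+q:ℝ) = q + 1 by ring, Real.rpow_add hb0, Real.rpow_one, hα]
        rw [Real.exp_neg]
        field_simp
      have hK : 0 ≤ b ^ q * Real.exp (-q) :=
        mul_nonneg (Real.rpow_nonneg hb q) (Real.exp_pos _).le
      calc (b ^ q * Real.exp (-q)) * ((Real.exp (α*b) - 1) / α)
          ≤ (b ^ q * Real.exp (-q)) * (Real.exp (α*b) / α) :=
            mul_le_mul_of_nonneg_left e6 hK
        _ = Real.exp b * b ^ (1+q) / (b+q) := e7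
    have h4 : Real.exp b * b ^ (1+q) / (b+q) ≤ 4 * Real.exp b * b ^ (1+q) / (1+q+b) := by
      have hbq : (0:ℝ) < b + q := by linarith
      rw [div_le_div_iff₀ hbq hD]
      nlinarith [mul_nonneg hEn.le hBn]
    linarith [h2 ▸ h1]

end IncGammaAux

open IncGammaAux

/-- There exist universal constants `C ≥ c > 0` such that for all `b, q ∈ [0,∞)`:
`c^{1+q} · min{1+q, b}^{1+q} ≤ ∫_0^b e^{-ω} ω^q dω ≤ C^{1+q} · min{1+q, b}^{1+q}` and
`c · e^b · b^{1+q}/(1+q+b) ≤ ∫_0^b e^{ω} ω^q dω ≤ C · e^b · b^{1+q}/(1+q+b)`. -/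
theorem incomplete_gamma_bounds :
    ∃ C c : ℝ, 0 < c ∧ c ≤ C ∧
      ∀ b q : ℝ, 0 ≤ b → 0 ≤ q →
        (c ^ (1 + q) * min (1 + q) b ^ (1 + q) ≤
            ∫ ω in Set.Icc (0 : ℝ) b, Real.exp (-ω) * ω ^ q ∧
         (∫ ω in Set.Icc (0 : ℝ) b, Real.exp (-ω) * ω ^ q) ≤
            C ^ (1 + q) * min (1 + q) b ^ (1 + q)) ∧
        (c * Real.exp b * b ^ (1 + q) / (1 + q + b) ≤
            ∫ ω in Set.Icc (0 : ℝ) b, Real.exp ω * ω ^ q ∧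
         (∫ ω in Set.Icc (0 : ℝ) b, Real.exp ω * ω ^ q) ≤
            C * Real.exp b * b ^ (1 + q) / (1 + q + b)) := by
  refine ⟨4, Real.exp (-2), Real.exp_pos _, ?_, fun b q hb hq =>
    ⟨⟨lower_neg hb hq, upper_neg hb hq⟩, ⟨lower_pos hb hq, upper_pos hb hq⟩⟩⟩
  have : Real.exp (-2) ≤ 1 := Real.exp_le_one_iff.mpr (by norm_num)
  linarith
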